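/- Consider the bowtie game G_⋈ under first-price poorman bidding, with Max's initial budget B > 0 and Min's initial budget drawn from a finite budget distribution γ with support {C_1 < … < C_n}. For every ε > 0, Min has a collection of strategies (g_j ∈ S_Min(C_j))_{1≤j≤n} such that for every Max strategy f ∈ S_Max(B), Σ_{j=1}^{n} γ(C_j)·payoff(f, g_j) < Pot(B, γ) + ε. -/

import Mathlib

open Filter Finset

noncomputable section

/-- A history of the bowtie game: the list of rounds played so far; each round
records the vertex at which the bidding took place (`true` is the vertex `u`
of weight 1, `false` is the vertex `v` of weight 0), Max's bid and Min's bid. -/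
abbrev Hist : Type := List (Bool × ℝ × ℝ)

/-- A pure strategy: given the history and the current vertex, produce a bid and
the vertex to move to upon winning the bidding. -/
abbrev Strat : Type := Hist → Bool → ℝ × Bool

/-- One bidding round: both players bid; the higher bidder moves the token
(ties are resolved in favor of Min). -/
def step (f g : Strat) (hv : Hist × Bool) : Hist × Bool :=
  (hv.1 ++ [(hv.2, (f hv.1 hv.2).1, (g hv.1 hv.2).1)],
    if (g hv.1 hv.2).1 < (f hv.1 hv.2).1 then (f hv.1 hv.2).2 else (g hv.1 hv.2).2)

/-- The history and current vertex after `n` rounds of the play induced by the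
Max strategy `f` and the Min strategy `g` from the initial vertex `v0`. -/
def hist (f g : Strat) (v0 : Bool) : ℕ → Hist × Bool
  | 0 => ([], v0)
  | n + 1 => step f g (hist f g v0 n)

/-- The vertex visited at time `n` in the play induced by `f` and `g` from `v0`. -/
def vtx (f g : Strat) (v0 : Bool) (n : ℕ) : Bool := (hist f g v0 n).2

/-- The weights of the bowtie game: `w(u) = 1`, `w(v) = 0`. -/
def wt (b : Bool) : ℝ := if b then 1 else 0

/-- The mean-payoff of the play induced by `f` and `g` from `v0`:
`liminf` of the average weight seen in the first `n` rounds. -/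
def payoff (f g : Strat) (v0 : Bool) : ℝ :=
  Filter.liminf (fun n : ℕ => (∑ i ∈ Finset.range n, wt (vtx f g v0 i)) / n) Filter.atTop

/-- First-price bidding: only the winner pays.  Max's total investment along a
history (the sum of his winning bids; ties are won by Min). -/
def fpMaxSpent (h : Hist) : ℝ := (h.map fun r => if r.2.2 < r.2.1 then r.2.1 else 0).sum

/-- Min's total investment along a history under first-price bidding. -/
def fpMinSpent (h : Hist) : ℝ := (h.map fun r => if r.2.2 < r.2.1 then 0 else r.2.2).sum

/-- `f ∈ S_Max(B)` under first-price poorman bidding: along any play consistent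
with `f`, all prescribed bids are nonnegative and do not exceed the remaining
budget of Max when his initial budget is `B`. -/
def fpMaxLegal (f : Strat) (B : ℝ) : Prop :=
  ∀ g : Strat, ∀ v0 : Bool, ∀ n : ℕ,
    0 ≤ (f (hist f g v0 n).1 (hist f g v0 n).2).1 ∧
    (f (hist f g v0 n).1 (hist f g v0 n).2).1 ≤ B - fpMaxSpent (hist f g v0 n).1

/-- `g ∈ S_Min(C)` under first-price poorman bidding. -/
def fpMinLegal (g : Strat) (C : ℝ) : Prop :=
  ∀ f : Strat, ∀ v0 : Bool, ∀ n : ℕ,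
    0 ≤ (g (hist f g v0 n).1 (hist f g v0 n).2).1 ∧
    (g (hist f g v0 n).1 (hist f g v0 n).2).1 ≤ C - fpMinSpent (hist f g v0 n).1

/-- The potential `Pot(B, γ) = ∑_{j=1}^n γ(C_j) · B/(B + C_j)`. -/
def Pot (B : ℝ) (n : ℕ) (w C : ℕ → ℝ) : ℝ :=
  ∑ j ∈ Finset.Icc 1 n, w j * (B / (B + C j))

-- ============================================================================
-- Auxiliary development
-- ============================================================================

open scoped Classical

/-- number of `true` vertices recorded in a history -/
def bgCnt (h : Hist) : ℕ := h.countP (fun r => r.1)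

/-- a history is *good* if the average weight so far is at most `θ` -/
def bgGood (θ : ℝ) (h : Hist) : Prop := (bgCnt h : ℝ) ≤ θ * h.length

/-- the number of good prefixes of a history -/
def bgGC (θ : ℝ) (h : Hist) : ℕ :=
  ∑ t ∈ Finset.range (h.length + 1), if bgGood θ (h.take t) then 1 else 0

def bgD (B C θ : ℝ) : ℝ := C - (1 - θ) * B / θ
def bgK (B C θ : ℝ) : ℝ := θ * bgD B C θ / 8

/-- Min's strategy: move to the weight-0 vertex, bid `κ·2^(-G)` where `G` is the
number of good prefixes so far, capped at half the remaining budget. -/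
def bgStrat (B C θ : ℝ) : Strat :=
  fun h _ => (min (bgK B C θ * (1/2) ^ bgGC θ h) ((C - fpMinSpent h) / 2), false)

/-- the trivial always-bid-zero strategy -/
def bgZero : Strat := fun _ _ => (0, false)

section BG

variable (B C θ : ℝ) (f : Strat) (v0 : Bool)

def bgh (k : ℕ) : Hist × Bool := hist f (bgStrat B C θ) v0 k
def bgF (k : ℕ) : ℝ := (f (bgh B C θ f v0 k).1 (bgh B C θ f v0 k).2).1
def bgM (k : ℕ) : ℝ := (bgStrat B C θ (bgh B C θ f v0 k).1 (bgh B C θ f v0 k).2).1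
def bgS (k : ℕ) : ℝ := fpMinSpent (bgh B C θ f v0 k).1
def bgX (k : ℕ) : ℝ := fpMaxSpent (bgh B C θ f v0 k).1
def bgN (k : ℕ) : ℕ := bgCnt (bgh B C θ f v0 k).1
def bgGoodN (k : ℕ) : Prop := bgGood θ (bgh B C θ f v0 k).1
def bgGCN (k : ℕ) : ℕ := ∑ t ∈ Finset.range (k+1), if bgGoodN B C θ f v0 t then 1 else 0
def bgWr (a b : ℕ) : ℝ :=
  ∑ s ∈ Finset.Ico a b, if bgM B C θ f v0 s < bgF B C θ f v0 s then (1:ℝ) else 0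
def bgc (j : ℕ) : ℝ := bgK B C θ * (1/2)^j / θ
def bgA (G : ℕ) : ℝ := ∑ j ∈ Finset.range G, 2 * bgc B C θ (j+1)

variable {B C θ f v0}

lemma bgh_succ (k : ℕ) :
    bgh B C θ f v0 (k+1) =
      ((bgh B C θ f v0 k).1 ++ [((bgh B C θ f v0 k).2, bgF B C θ f v0 k, bgM B C θ f v0 k)],
        if bgM B C θ f v0 k < bgF B C θ f v0 k then (f (bgh B C θ f v0 k).1 (bgh B C θ f v0 k).2).2
        else false) := by
  show step f (bgStrat B C θ) (bgh B C θ f v0 k) = _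
  rw [step]
  rfl

lemma bgh_len (k : ℕ) : (bgh B C θ f v0 k).1.length = k := by
  induction k with
  | zero => rfl
  | succ k ih => rw [bgh_succ]; simp [ih]

lemma bgh_take {t k : ℕ} (h : t ≤ k) :
    (bgh B C θ f v0 k).1.take t = (bgh B C θ f v0 t).1 := by
  induction k with
  | zero => simp at h; subst h; rfl
  | succ k ih =>
      rcases Nat.lt_or_ge t (k+1) with h' | h'
      · rw [bgh_succ]
        simpa using (List.take_append_of_le_length (l₂ := [((bgh B C θ f v0 k).2, bgF B C θ f v0 k, bgM B C θ f v0 k)]) (by rw [bgh_len]; omega)).trans (ih (by omega))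
      · have : t = k + 1 := le_antisymm h h'
        subst this
        have h1 : (bgh B C θ f v0 (k+1)).1.take ((bgh B C θ f v0 (k+1)).1.length)
            = (bgh B C θ f v0 (k+1)).1 := List.take_length
        rwa [bgh_len] at h1

lemma bgS_succ (k : ℕ) :
    bgS B C θ f v0 (k+1) = bgS B C θ f v0 k +
      (if bgM B C θ f v0 k < bgF B C θ f v0 k then 0 else bgM B C θ f v0 k) := by
  rw [bgS, bgh_succ, bgS]
  simp [fpMinSpent]

lemma bgX_succ (k : ℕ) :
    bgX B C θ f v0 (k+1) = bgX B C θ f v0 k +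
      (if bgM B C θ f v0 k < bgF B C θ f v0 k then bgF B C θ f v0 k else 0) := by
  rw [bgX, bgh_succ, bgX]
  simp [fpMaxSpent]

lemma bgN_succ (k : ℕ) :
    bgN B C θ f v0 (k+1) = bgN B C θ f v0 k +
      (if (bgh B C θ f v0 k).2 then 1 else 0) := by
  rw [bgN, bgh_succ, bgN]
  simp [bgCnt, List.countP_append, List.countP_cons]

lemma bg_vtx_true {k : ℕ} (h : (bgh B C θ f v0 (k+1)).2 = true) :
    bgM B C θ f v0 k < bgF B C θ f v0 k := by
  by_contra hw
  rw [bgh_succ] at h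
  simp only [if_neg hw] at h
  exact Bool.false_ne_true h

lemma bgGoodN_iff (k : ℕ) :
    bgGoodN B C θ f v0 k ↔ (bgN B C θ f v0 k : ℝ) ≤ θ * k := by
  rw [bgGoodN, bgGood, bgh_len, bgN]

lemma bg_good0 : bgGoodN B C θ f v0 0 := by
  rw [bgGoodN_iff]
  simp [bgN, bgh, hist, bgCnt]

lemma bgGCN_eq (k : ℕ) : bgGC θ (bgh B C θ f v0 k).1 = bgGCN B C θ f v0 k := by
  rw [bgGC, bgh_len, bgGCN]
  refine Finset.sum_congr rfl (fun t ht => ?_)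
  rw [Finset.mem_range] at ht
  rw [bgh_take (by omega : t ≤ k)]
  rfl

lemma bgM_eq (k : ℕ) :
    bgM B C θ f v0 k = min (bgK B C θ * (1/2) ^ bgGCN B C θ f v0 k)
      ((C - bgS B C θ f v0 k) / 2) := by
  rw [bgM, bgStrat, bgGCN_eq]
  rfl

lemma bgGCN_succ (k : ℕ) :
    bgGCN B C θ f v0 (k+1) = bgGCN B C θ f v0 k +
      (if bgGoodN B C θ f v0 (k+1) then 1 else 0) := by
  rw [bgGCN, bgGCN, Finset.sum_range_succ]

lemma bgGCN_pos (k : ℕ) : 1 ≤ bgGCN B C θ f v0 k := by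
  rw [bgGCN]
  calc (1:ℕ) = if bgGoodN B C θ f v0 0 then 1 else 0 := by rw [if_pos bg_good0]
    _ ≤ _ := Finset.single_le_sum (f := fun t => if bgGoodN B C θ f v0 t then 1 else 0)
        (fun i _ => by positivity) (Finset.mem_range.2 (by omega))

lemma bgGCN_const {T s : ℕ} (hTs : T ≤ s)
    (hno : ∀ t, T < t → t ≤ s → ¬ bgGoodN B C θ f v0 t) :
    bgGCN B C θ f v0 s = bgGCN B C θ f v0 T := by
  rw [bgGCN, bgGCN, Finset.range_eq_Ico,
    ← Finset.sum_Ico_consecutive (fun t => if bgGoodN B C θ f v0 t then 1 else 0)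
      (Nat.zero_le (T+1)) (by omega : T + 1 ≤ s + 1)]
  have : ∑ t ∈ Finset.Ico (T+1) (s+1), (if bgGoodN B C θ f v0 t then 1 else 0) = 0 := by
    refine Finset.sum_eq_zero (fun t ht => ?_)
    rw [Finset.mem_Ico] at ht
    rw [if_neg (hno t (by omega) (by omega))]
  rw [this, add_zero, Finset.range_eq_Ico]


lemma bg_teles (u g : ℕ → ℝ) (h : ∀ s, u (s+1) = u s + g s) {a b : ℕ} (hab : a ≤ b) :
    u b = u a + ∑ s ∈ Finset.Ico a b, g s := by
  induction b, hab using Nat.le_induction with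
  | base => simp
  | succ b hab ih => rw [h b, ih, Finset.sum_Ico_succ_top hab]; ring

section BG2

variable {B C θ : ℝ} {f : Strat} {v0 : Bool}

lemma bgN_succ' (k : ℕ) :
    (bgN B C θ f v0 (k+1) : ℝ) = bgN B C θ f v0 k +
      (if (bgh B C θ f v0 k).2 then 1 else 0) := by
  rw [bgN_succ]
  by_cases h : (bgh B C θ f v0 k).2 <;> simp [h]

lemma bgWr_succ {a b : ℕ} (hab : a ≤ b) :
    bgWr B C θ f v0 a (b+1) = bgWr B C θ f v0 a b +
      (if bgM B C θ f v0 b < bgF B C θ f v0 b then (1:ℝ) else 0) := by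
  rw [bgWr, bgWr, Finset.sum_Ico_succ_top hab]

lemma bgWr_nonneg (a b : ℕ) : 0 ≤ bgWr B C θ f v0 a b :=
  Finset.sum_nonneg (fun s _ => by positivity)

lemma bgN_window {a b : ℕ} (hab : a ≤ b) :
    (bgN B C θ f v0 b : ℝ) ≤ bgN B C θ f v0 a + 1 + bgWr B C θ f v0 a b := by
  have claim : ∀ d : ℕ, (bgN B C θ f v0 (a+1+d) : ℝ) ≤
      bgN B C θ f v0 (a+1) + bgWr B C θ f v0 a (a+d) := by
    intro d
    induction d with
    | zero => simp [bgWr]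
    | succ d ih =>
        have hidx : a+1+(d+1) = (a+1+d)+1 := by omega
        have hidx2 : a+1+d = (a+d)+1 := by omega
        rw [hidx, bgN_succ']
        have h2 : (if (bgh B C θ f v0 (a+1+d)).2 then (1:ℝ) else 0) ≤
            (if bgM B C θ f v0 (a+d) < bgF B C θ f v0 (a+d) then (1:ℝ) else 0) := by
          by_cases hv : (bgh B C θ f v0 (a+1+d)).2
          · rw [if_pos hv, if_pos (bg_vtx_true (by rw [← hidx2]; exact hv))]
          · rw [if_neg hv]; positivity
        have h3 := bgWr_succ (B := B) (C := C) (θ := θ) (f := f) (v0 := v0)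
          (a := a) (b := a + d) (by omega)
        rw [show a + d + 1 = a + (d+1) from by omega] at h3
        rw [h3]
        linarith
  rcases Nat.eq_or_lt_of_le hab with rfl | hlt
  · have : bgWr B C θ f v0 a a = 0 := by simp [bgWr]
    rw [this]; linarith
  · obtain ⟨d, rfl⟩ : ∃ d, b = a + 1 + d := ⟨b - (a+1), by omega⟩
    have h1 := claim d
    have h2 : (bgN B C θ f v0 (a+1) : ℝ) ≤ bgN B C θ f v0 a + 1 := by
      rw [bgN_succ']
      by_cases hv : (bgh B C θ f v0 a).2 <;> simp [hv]
    have h3 : bgWr B C θ f v0 a (a+d) ≤ bgWr B C θ f v0 a (a+1+d) := by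
      have h4 := bgWr_succ (B := B) (C := C) (θ := θ) (f := f) (v0 := v0)
        (a := a) (b := a + d) (by omega)
      rw [show a + d + 1 = a + 1 + d from by omega] at h4
      rw [h4]
      have : (0:ℝ) ≤ (if bgM B C θ f v0 (a+d) < bgF B C θ f v0 (a+d) then (1:ℝ) else 0) := by
        positivity
      linarith
    linarith

lemma bgS_zero : bgS B C θ f v0 0 = 0 := by simp [bgS, bgh, hist, fpMinSpent]

lemma bgX_zero : bgX B C θ f v0 0 = 0 := by simp [bgX, bgh, hist, fpMaxSpent]

lemma bgN_zero : bgN B C θ f v0 0 = 0 := by simp [bgN, bgh, hist, bgCnt]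

lemma bgS_le_C (hC : 0 ≤ C) (hK : 0 ≤ bgK B C θ) (k : ℕ) : bgS B C θ f v0 k ≤ C := by
  induction k with
  | zero => rw [bgS_zero]; exact hC
  | succ k ih =>
      rw [bgS_succ]
      have hm : bgM B C θ f v0 k ≤ (C - bgS B C θ f v0 k)/2 := by
        rw [bgM_eq]; exact min_le_right _ _
      by_cases hw : bgM B C θ f v0 k < bgF B C θ f v0 k
      · rw [if_pos hw]; linarith
      · rw [if_neg hw]; linarith

lemma bgM_nonneg (hC : 0 ≤ C) (hK : 0 ≤ bgK B C θ) (k : ℕ) : 0 ≤ bgM B C θ f v0 k := by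
  rw [bgM_eq]
  refine le_min (by positivity) ?_
  have := bgS_le_C (B := B) (θ := θ) (f := f) (v0 := v0) hC hK k
  linarith

lemma bgStrat_legal (hC : 0 ≤ C) (hK : 0 ≤ bgK B C θ) : fpMinLegal (bgStrat B C θ) C := by
  intro f v0 k
  have h1 : (bgStrat B C θ (hist f (bgStrat B C θ) v0 k).1 (hist f (bgStrat B C θ) v0 k).2).1
      = bgM B C θ f v0 k := rfl
  have h2 : fpMinSpent (hist f (bgStrat B C θ) v0 k).1 = bgS B C θ f v0 k := rfl
  rw [h1, h2]
  refine ⟨bgM_nonneg hC hK k, ?_⟩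
  have h3 : bgM B C θ f v0 k ≤ (C - bgS B C θ f v0 k)/2 := by
    rw [bgM_eq]; exact min_le_right _ _
  have h4 := bgS_le_C (B := B) (θ := θ) (f := f) (v0 := v0) hC hK k
  linarith

section withMax

variable (hf : fpMaxLegal f B)
include hf

lemma bgF_nonneg (k : ℕ) : 0 ≤ bgF B C θ f v0 k := (hf (bgStrat B C θ) v0 k).1

lemma bgF_le (k : ℕ) : bgF B C θ f v0 k ≤ B - bgX B C θ f v0 k := (hf (bgStrat B C θ) v0 k).2

lemma bgX_mono {a b : ℕ} (hab : a ≤ b) : bgX B C θ f v0 a ≤ bgX B C θ f v0 b := by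
  induction b, hab using Nat.le_induction with
  | base => exact le_refl _
  | succ b hab ih =>
      rw [bgX_succ]
      have : (0:ℝ) ≤ (if bgM B C θ f v0 b < bgF B C θ f v0 b then bgF B C θ f v0 b else 0) := by
        by_cases hw : bgM B C θ f v0 b < bgF B C θ f v0 b
        · rw [if_pos hw]; exact bgF_nonneg hf b
        · rw [if_neg hw]
      linarith

lemma bgX_nonneg (k : ℕ) : 0 ≤ bgX B C θ f v0 k := by
  have := bgX_mono (B := B) (C := C) (θ := θ) (v0 := v0) hf (Nat.zero_le k)
  rw [bgX_zero] at this
  exact this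

lemma bgX_le_B (hB : 0 ≤ B) (k : ℕ) : bgX B C θ f v0 k ≤ B := by
  induction k with
  | zero => rw [bgX_zero]; exact hB
  | succ k ih =>
      rw [bgX_succ]
      by_cases hw : bgM B C θ f v0 k < bgF B C θ f v0 k
      · rw [if_pos hw]
        have := bgF_le (B := B) (C := C) (θ := θ) (v0 := v0) hf k
        linarith
      · rw [if_neg hw]; linarith

end withMax

end BG2

section BG3

variable {B C θ : ℝ} {f : Strat} {v0 : Bool}

lemma bg_thetapos (hB : 0 < B) (hC : 0 < C) (hθl : B / (B + C) < θ) : 0 < θ :=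
  lt_trans (div_pos hB (by linarith)) hθl

lemma bg_Dpos (hB : 0 < B) (hC : 0 < C) (hθl : B / (B + C) < θ) : 0 < bgD B C θ := by
  have hθ : 0 < θ := bg_thetapos hB hC hθl
  rw [div_lt_iff₀ (by linarith : (0:ℝ) < B + C)] at hθl
  rw [bgD, sub_pos, div_lt_iff₀ hθ]
  nlinarith

lemma bg_Kpos (hB : 0 < B) (hC : 0 < C) (hθl : B / (B + C) < θ) : 0 < bgK B C θ := by
  have hθ : 0 < θ := bg_thetapos hB hC hθl
  have hD := bg_Dpos hB hC hθl
  rw [bgK]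
  positivity

lemma bgc_pos (hB : 0 < B) (hC : 0 < C) (hθl : B / (B + C) < θ) (j : ℕ) :
    0 < bgc B C θ j := by
  have hθ : 0 < θ := bg_thetapos hB hC hθl
  have hK := bg_Kpos hB hC hθl
  rw [bgc]
  positivity

lemma bg_geo (G : ℕ) : ∑ j ∈ Finset.range G, ((1:ℝ)/2)^j ≤ 2 := by
  have h : ∀ G : ℕ, ∑ j ∈ Finset.range G, ((1:ℝ)/2)^j = 2 - 2*((1:ℝ)/2)^G := by
    intro G
    induction G with
    | zero => simp
    | succ G ih => rw [Finset.sum_range_succ, ih, pow_succ]; ring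
  rw [h]
  have : (0:ℝ) ≤ ((1:ℝ)/2)^G := by positivity
  linarith

lemma bgA_le (hB : 0 < B) (hC : 0 < C) (hθl : B / (B + C) < θ) (G : ℕ) :
    bgA B C θ G ≤ bgD B C θ / 4 := by
  have hθ : 0 < θ := bg_thetapos hB hC hθl
  have hD := bg_Dpos hB hC hθl
  have h1 : bgA B C θ G = bgD B C θ / 8 * ∑ j ∈ Finset.range G, ((1:ℝ)/2)^j := by
    rw [bgA, Finset.mul_sum]
    refine Finset.sum_congr rfl (fun j _ => ?_)
    rw [bgc, bgK, pow_succ]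
    field_simp
  rw [h1]
  have h2 := bg_geo G
  nlinarith

lemma bgA_nonneg (hB : 0 < B) (hC : 0 < C) (hθl : B / (B + C) < θ) (G : ℕ) :
    0 ≤ bgA B C θ G :=
  Finset.sum_nonneg (fun j _ => by have := bgc_pos hB hC hθl (j+1); linarith)

lemma bgA_succ (G : ℕ) : bgA B C θ (G+1) = bgA B C θ G + 2 * bgc B C θ (G+1) :=
  Finset.sum_range_succ _ _

/-- the key budget invariant -/
def bgInvP (B C θ : ℝ) (f : Strat) (v0 : Bool) (k : ℕ) : Prop :=
  bgS B C θ f v0 k ≤ (1-θ)/θ * bgX B C θ f v0 k + bgA B C θ (bgGCN B C θ f v0 k - 1)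
      + (if bgGoodN B C θ f v0 k then 0 else bgc B C θ (bgGCN B C θ f v0 k))

lemma bg_nb_aux (hB : 0 < B) (hC : 0 < C) (hθl : B / (B + C) < θ) (hθ1 : θ < 1)
    (hf : fpMaxLegal f B) (s : ℕ) (hInv : bgInvP B C θ f v0 s) :
    bgM B C θ f v0 s = bgK B C θ * (1/2)^(bgGCN B C θ f v0 s) := by
  have hθ : 0 < θ := bg_thetapos hB hC hθl
  have hD := bg_Dpos hB hC hθl
  have hK := bg_Kpos hB hC hθl
  have h1 : bgX B C θ f v0 s ≤ B := bgX_le_B hf hB.le s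
  have h2 : bgA B C θ (bgGCN B C θ f v0 s - 1) ≤ bgD B C θ / 4 := bgA_le hB hC hθl _
  have h3 : bgc B C θ (bgGCN B C θ f v0 s) ≤ bgD B C θ / 16 := by
    have hg1 := bgGCN_pos (B := B) (C := C) (θ := θ) (f := f) (v0 := v0) s
    have h4 : ((1:ℝ)/2)^(bgGCN B C θ f v0 s) ≤ ((1:ℝ)/2)^1 :=
      pow_le_pow_of_le_one (by norm_num) (by norm_num) hg1
    rw [bgc, bgK]
    rw [div_le_iff₀ hθ]
    have h5 : θ * bgD B C θ / 8 * ((1:ℝ)/2) ≤ bgD B C θ / 16 * θ := by nlinarith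
    calc θ * bgD B C θ / 8 * ((1:ℝ)/2)^(bgGCN B C θ f v0 s)
        ≤ θ * bgD B C θ / 8 * ((1:ℝ)/2)^1 := by
          apply mul_le_mul_of_nonneg_left h4; positivity
      _ ≤ bgD B C θ / 16 * θ := by norm_num at h5 ⊢; nlinarith
  have hite : (if bgGoodN B C θ f v0 s then (0:ℝ) else bgc B C θ (bgGCN B C θ f v0 s))
      ≤ bgD B C θ / 16 := by
    split
    · linarith
    · exact h3
  have hSle : bgS B C θ f v0 s ≤ C - 11/16 * bgD B C θ := by
    have h6 : (0:ℝ) ≤ (1-θ)/θ := div_nonneg (by linarith) hθ.le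
    have h4 : (1-θ)/θ * bgX B C θ f v0 s ≤ (1-θ)/θ * B := mul_le_mul_of_nonneg_left h1 h6
    have h5 : (1-θ)/θ * B = C - bgD B C θ := by rw [bgD]; field_simp; ring
    rw [bgInvP] at hInv
    linarith
  rw [bgM_eq]
  refine min_eq_left ?_
  have hg1 := bgGCN_pos (B := B) (C := C) (θ := θ) (f := f) (v0 := v0) s
  have h4 : ((1:ℝ)/2)^(bgGCN B C θ f v0 s) ≤ ((1:ℝ)/2)^1 :=
    pow_le_pow_of_le_one (by norm_num) (by norm_num) hg1
  have h7 : bgK B C θ * (1/2)^(bgGCN B C θ f v0 s) ≤ bgD B C θ / 16 := by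
    rw [bgK]
    calc θ * bgD B C θ / 8 * ((1:ℝ)/2)^(bgGCN B C θ f v0 s)
        ≤ θ * bgD B C θ / 8 * ((1:ℝ)/2)^1 := by
          apply mul_le_mul_of_nonneg_left h4; positivity
      _ ≤ bgD B C θ / 16 := by nlinarith
  linarith

end BG3

section BG4

variable {B C θ : ℝ} {f : Strat} {v0 : Bool}

lemma bgINV (hB : 0 < B) (hC : 0 < C) (hθl : B / (B + C) < θ) (hθ1 : θ < 1)
    (hf : fpMaxLegal f B) : ∀ k, bgInvP B C θ f v0 k := by
  have hθ : 0 < θ := bg_thetapos hB hC hθl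
  have hD := bg_Dpos hB hC hθl
  have hK := bg_Kpos hB hC hθl
  have h1θ : (0:ℝ) ≤ (1-θ)/θ := div_nonneg (by linarith) hθ.le
  intro k
  induction k using Nat.strong_induction_on with
  | _ n IH =>
  have hNB : ∀ s, s < n → bgM B C θ f v0 s = bgK B C θ * (1/2)^(bgGCN B C θ f v0 s) :=
    fun s hs => bg_nb_aux hB hC hθl hθ1 hf s (IH s hs)
  by_cases hg : bgGoodN B C θ f v0 n
  · rcases n with _ | m
    · rw [bgInvP, if_pos hg]
      have hgc0 : bgGCN B C θ f v0 0 = 1 := by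
        rw [bgGCN, Finset.sum_range_one, if_pos bg_good0]
      rw [hgc0, bgS_zero, bgX_zero]
      simp [bgA]
    · have hgc : bgGCN B C θ f v0 (m+1) = bgGCN B C θ f v0 m + 1 := by
        rw [bgGCN_succ, if_pos hg]
      have hIH := IH m (by omega)
      rw [bgInvP] at hIH ⊢
      have hbm : bgM B C θ f v0 m ≤ bgK B C θ * (1/2)^(bgGCN B C θ f v0 m) := by
        rw [bgM_eq]; exact min_le_left _ _
      have hcK : θ * bgc B C θ (bgGCN B C θ f v0 m) = bgK B C θ * (1/2)^(bgGCN B C θ f v0 m) := by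
        rw [bgc, mul_comm θ, div_mul_cancel₀ _ hθ.ne']
      have hstep : bgS B C θ f v0 (m+1) ≤ bgS B C θ f v0 m
          + θ * bgc B C θ (bgGCN B C θ f v0 m) := by
        rw [bgS_succ, hcK]
        have hKnn : (0:ℝ) ≤ bgK B C θ * (1/2)^(bgGCN B C θ f v0 m) := by positivity
        split
        · linarith
        · linarith
      have hX : bgX B C θ f v0 m ≤ bgX B C θ f v0 (m+1) := bgX_mono hf (by omega)
      have hcpos := bgc_pos hB hC hθl (bgGCN B C θ f v0 m)
      have hite : (if bgGoodN B C θ f v0 m then (0:ℝ) else bgc B C θ (bgGCN B C θ f v0 m))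
          ≤ bgc B C θ (bgGCN B C θ f v0 m) := by split <;> linarith
      have hg1 := bgGCN_pos (B := B) (C := C) (θ := θ) (f := f) (v0 := v0) m
      obtain ⟨G, hG⟩ : ∃ G, bgGCN B C θ f v0 m = G + 1 :=
        ⟨bgGCN B C θ f v0 m - 1, by omega⟩
      have hA : bgA B C θ (bgGCN B C θ f v0 (m+1) - 1)
          = bgA B C θ (bgGCN B C θ f v0 m - 1) + 2 * bgc B C θ (bgGCN B C θ f v0 m) := by
        rw [hgc, hG]
        simp only [Nat.add_sub_cancel]
        exact bgA_succ G
      rw [if_pos hg, hA]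
      have hXc : (1-θ)/θ * bgX B C θ f v0 m ≤ (1-θ)/θ * bgX B C θ f v0 (m+1) :=
        mul_le_mul_of_nonneg_left hX h1θ
      have hθc : θ * bgc B C θ (bgGCN B C θ f v0 m) ≤ bgc B C θ (bgGCN B C θ f v0 m) := by
        nlinarith
      linarith
  · -- bad case
    have hTgood : bgGoodN B C θ f v0 (Nat.findGreatest (bgGoodN B C θ f v0) n) :=
      Nat.findGreatest_spec (Nat.zero_le n) bg_good0
    set T := Nat.findGreatest (bgGoodN B C θ f v0) n with hTdef
    have hTle : T ≤ n := Nat.findGreatest_le n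
    have hTlt : T < n := lt_of_le_of_ne hTle (fun he => hg (he ▸ hTgood))
    have hno : ∀ t, T < t → t ≤ n → ¬ bgGoodN B C θ f v0 t := fun t h1 h2 =>
      Nat.findGreatest_is_greatest h1 h2
    have hgcc : ∀ s, T ≤ s → s ≤ n → bgGCN B C θ f v0 s = bgGCN B C θ f v0 T :=
      fun s h1 h2 => bgGCN_const h1 (fun t a b => hno t a (le_trans b h2))
    obtain ⟨G, hGdef⟩ : ∃ G, G = bgGCN B C θ f v0 T := ⟨_, rfl⟩
    obtain ⟨b, hbdef⟩ : ∃ b, b = bgK B C θ * (1/2)^G := ⟨_, rfl⟩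
    have hbpos : 0 < b := by rw [hbdef]; positivity
    have hMb : ∀ s ∈ Finset.Ico T n, bgM B C θ f v0 s = b := by
      intro s hs
      rw [Finset.mem_Ico] at hs
      rw [hNB s hs.2, hgcc s hs.1 hs.2.le, ← hGdef, ← hbdef]
    have hSW : bgS B C θ f v0 n = bgS B C θ f v0 T + ∑ s ∈ Finset.Ico T n,
        (if bgM B C θ f v0 s < bgF B C θ f v0 s then 0 else bgM B C θ f v0 s) :=
      bg_teles _ _ (fun s => bgS_succ s) hTle
    have hXW : bgX B C θ f v0 n = bgX B C θ f v0 T + ∑ s ∈ Finset.Ico T n,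
        (if bgM B C θ f v0 s < bgF B C θ f v0 s then bgF B C θ f v0 s else 0) :=
      bg_teles _ _ (fun s => bgX_succ s) hTle
    set Wr := bgWr B C θ f v0 T n with hWdef
    have hWnn : 0 ≤ Wr := bgWr_nonneg T n
    have hS2 : bgS B C θ f v0 n ≤ bgS B C θ f v0 T + b * (((n:ℝ) - T) - Wr) := by
      rw [hSW]
      have he : ∑ s ∈ Finset.Ico T n,
          (if bgM B C θ f v0 s < bgF B C θ f v0 s then (0:ℝ) else bgM B C θ f v0 s)
          = ∑ s ∈ Finset.Ico T n,
          (b - b * (if bgM B C θ f v0 s < bgF B C θ f v0 s then (1:ℝ) else 0)) := by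
        refine Finset.sum_congr rfl (fun s hs => ?_)
        rw [hMb s hs]
        split <;> ring
      rw [he, Finset.sum_sub_distrib, Finset.sum_const, Nat.card_Ico, ← Finset.mul_sum]
      rw [← bgWr, ← hWdef, nsmul_eq_mul, Nat.cast_sub hTle]
      have : ((n:ℝ) - T) * b = b * ((n:ℝ) - T) := by ring
      rw [this]
      linarith [mul_sub b ((n:ℝ) - T) Wr]
    have hX2 : bgX B C θ f v0 T + b * Wr ≤ bgX B C θ f v0 n := by
      rw [hXW, hWdef, bgWr, Finset.mul_sum]
      have hle : ∀ s ∈ Finset.Ico T n,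
          b * (if bgM B C θ f v0 s < bgF B C θ f v0 s then (1:ℝ) else 0)
          ≤ (if bgM B C θ f v0 s < bgF B C θ f v0 s then bgF B C θ f v0 s else 0) := by
        intro s hs
        have hM := hMb s hs
        split
        · rename_i hw
          rw [mul_one]
          rw [hM] at hw
          linarith
        · rw [mul_zero]
      linarith [Finset.sum_le_sum hle]
    have hcnt : θ * ((n:ℝ) - T) < 1 + Wr := by
      have h1 : θ * n < bgN B C θ f v0 n := by
        rw [bgGoodN_iff] at hg
        push_neg at hg
        exact hg
      have h2 : (bgN B C θ f v0 T : ℝ) ≤ θ * T := (bgGoodN_iff T).1 hTgood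
      have h3 := bgN_window (B := B) (C := C) (θ := θ) (f := f) (v0 := v0) hTle
      rw [← hWdef] at h3
      nlinarith
    have hb2 : b * (((n:ℝ) - T) - Wr) ≤ bgc B C θ G + (1-θ)/θ * (b * Wr) := by
      have key : ((n:ℝ) - T) - Wr ≤ (1 + (1-θ)*Wr)/θ := by
        rw [le_div_iff₀ hθ]
        nlinarith
      have h5 := mul_le_mul_of_nonneg_left key hbpos.le
      have h6 : b * ((1 + (1-θ)*Wr)/θ) = b/θ + (1-θ)/θ*(b*Wr) := by
        field_simp
      have h7 : b/θ = bgc B C θ G := by rw [hbdef, bgc]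

      linarith
    have hIHT := IH T hTlt
    rw [bgInvP, if_pos hTgood] at hIHT
    have hgcn : bgGCN B C θ f v0 n = G := by rw [hgcc n hTle le_rfl, ← hGdef]
    rw [bgInvP, if_neg hg, hgcn]
    have hmul : (1-θ)/θ * (b*Wr) ≤ (1-θ)/θ * (bgX B C θ f v0 n - bgX B C θ f v0 T) :=
      mul_le_mul_of_nonneg_left (by linarith) h1θ
    have hexp : (1-θ)/θ*(bgX B C θ f v0 n - bgX B C θ f v0 T)
        = (1-θ)/θ*bgX B C θ f v0 n - (1-θ)/θ*bgX B C θ f v0 T := by ring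
    rw [← hGdef] at hIHT
    linarith

lemma bgM_nb (hB : 0 < B) (hC : 0 < C) (hθl : B / (B + C) < θ) (hθ1 : θ < 1)
    (hf : fpMaxLegal f B) (k : ℕ) :
    bgM B C θ f v0 k = bgK B C θ * (1/2)^(bgGCN B C θ f v0 k) :=
  bg_nb_aux hB hC hθl hθ1 hf k (bgINV hB hC hθl hθ1 hf k)

end BG4

section BG5

variable {B C θ : ℝ} {f : Strat} {v0 : Bool}

lemma bg_good_unbounded (hB : 0 < B) (hC : 0 < C) (hθl : B / (B + C) < θ) (hθ1 : θ < 1)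
    (hf : fpMaxLegal f B) (N : ℕ) : ∃ k, N ≤ k ∧ bgGoodN B C θ f v0 k := by
  have hθ : 0 < θ := bg_thetapos hB hC hθl
  by_contra hcon
  push_neg at hcon
  have hTgood : bgGoodN B C θ f v0 (Nat.findGreatest (bgGoodN B C θ f v0) N) :=
    Nat.findGreatest_spec (Nat.zero_le N) bg_good0
  set T := Nat.findGreatest (bgGoodN B C θ f v0) N with hTdef
  have hTle : T ≤ N := Nat.findGreatest_le N
  have hno : ∀ t, T < t → ¬ bgGoodN B C θ f v0 t := by
    intro t ht
    rcases le_or_gt t N with h | h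
    · exact Nat.findGreatest_is_greatest ht h
    · exact hcon t h.le
  have hgcc : ∀ s, T ≤ s → bgGCN B C θ f v0 s = bgGCN B C θ f v0 T :=
    fun s h1 => bgGCN_const h1 (fun t a _ => hno t a)
  obtain ⟨G, hGdef⟩ : ∃ G, G = bgGCN B C θ f v0 T := ⟨_, rfl⟩
  obtain ⟨b, hbdef⟩ : ∃ b, b = bgK B C θ * (1/2)^G := ⟨_, rfl⟩
  have hK := bg_Kpos hB hC hθl
  have hbpos : 0 < b := by rw [hbdef]; positivity
  -- choose a large time
  obtain ⟨q, hq⟩ := exists_nat_gt ((1 + B/b)/θ)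
  have hcon2 : ∀ k, N ≤ k → ¬ bgGoodN B C θ f v0 k := fun k hk => hcon k hk
  -- window [T, k) with k := N + q
  have hMb : ∀ s ∈ Finset.Ico T (N + q), bgM B C θ f v0 s = b := by
    intro s hs
    rw [Finset.mem_Ico] at hs
    rw [bgM_nb hB hC hθl hθ1 hf s, hgcc s hs.1, ← hGdef, ← hbdef]
  have hXW : bgX B C θ f v0 (N+q) = bgX B C θ f v0 T + ∑ s ∈ Finset.Ico T (N+q),
      (if bgM B C θ f v0 s < bgF B C θ f v0 s then bgF B C θ f v0 s else 0) :=
    bg_teles _ _ (fun s => bgX_succ s) (by omega)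
  have hX2 : bgX B C θ f v0 T + b * bgWr B C θ f v0 T (N+q) ≤ bgX B C θ f v0 (N+q) := by
    rw [hXW, bgWr, Finset.mul_sum]
    have hle : ∀ s ∈ Finset.Ico T (N+q),
        b * (if bgM B C θ f v0 s < bgF B C θ f v0 s then (1:ℝ) else 0)
        ≤ (if bgM B C θ f v0 s < bgF B C θ f v0 s then bgF B C θ f v0 s else 0) := by
      intro s hs
      have hM := hMb s hs
      split
      · rename_i hw
        rw [mul_one, hM] at *
        rw [hM] at hw
        linarith
      · rw [mul_zero]
    linarith [Finset.sum_le_sum hle]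
  have hXB := bgX_le_B (B := B) (C := C) (θ := θ) (v0 := v0) hf hB.le (N+q)
  have hX0 := bgX_nonneg (B := B) (C := C) (θ := θ) (v0 := v0) hf T
  have hWle : bgWr B C θ f v0 T (N+q) ≤ B / b := by
    rw [le_div_iff₀ hbpos]
    nlinarith
  -- counting at time N+q
  have hbadk : ¬ bgGoodN B C θ f v0 (N+q) := hcon2 _ (by omega)
  have h1 : θ * (N+q : ℕ) < bgN B C θ f v0 (N+q) := by
    rw [bgGoodN_iff] at hbadk
    push_neg at hbadk
    exact hbadk
  have h2 : (bgN B C θ f v0 T : ℝ) ≤ θ * T := (bgGoodN_iff T).1 hTgood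
  have h3 := bgN_window (B := B) (C := C) (θ := θ) (f := f) (v0 := v0)
    (a := T) (b := N + q) (by omega)
  have hcast : ((N + q : ℕ) : ℝ) = (N : ℝ) + q := by push_cast; ring
  have hTcast : (T:ℝ) ≤ (N:ℝ) := by exact_mod_cast hTle
  -- θ * q ≤ θ * ((N+q) - T) < 1 + Wr ≤ 1 + B/b, but θ * q > 1 + B/b
  have hq2 : 1 + B/b < θ * q := by
    rw [div_lt_iff₀ hθ] at hq
    linarith
  nlinarith

lemma bg_sumwt (m : ℕ) :
    (∑ i ∈ Finset.range m, wt (vtx f (bgStrat B C θ) v0 i)) = (bgN B C θ f v0 m : ℝ) := by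
  induction m with
  | zero => simp [bgN_zero]
  | succ m ih =>
      rw [Finset.sum_range_succ, ih, bgN_succ']
      have : vtx f (bgStrat B C θ) v0 m = (bgh B C θ f v0 m).2 := rfl
      rw [this, wt]

lemma bg_avg_nonneg (g : Strat) (m : ℕ) :
    0 ≤ (∑ i ∈ Finset.range m, wt (vtx f g v0 i)) / m := by
  apply div_nonneg _ (Nat.cast_nonneg m)
  refine Finset.sum_nonneg (fun i _ => ?_)
  rw [wt]
  split <;> norm_num

lemma bg_payoff_le (hB : 0 < B) (hC : 0 < C) (hθl : B / (B + C) < θ) (hθ1 : θ < 1)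
    (hf : fpMaxLegal f B) : payoff f (bgStrat B C θ) v0 ≤ θ := by
  have hθ : 0 < θ := bg_thetapos hB hC hθl
  rw [payoff]
  apply Filter.liminf_le_of_frequently_le
  · rw [Filter.frequently_atTop]
    intro N
    obtain ⟨k, hkN, hk⟩ := bg_good_unbounded (v0 := v0) hB hC hθl hθ1 hf N
    refine ⟨k, hkN, ?_⟩
    rw [bg_sumwt]
    rcases Nat.eq_zero_or_pos k with rfl | hkpos
    · simp [bgN_zero]
      exact hθ.le
    · rw [div_le_iff₀ (by exact_mod_cast hkpos : (0:ℝ) < (k:ℝ))]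
      have := (bgGoodN_iff k).1 hk
      linarith
  · exact Filter.isBoundedUnder_of ⟨0, fun m => bg_avg_nonneg _ m⟩

lemma bg_payoff_le_one (g : Strat) : payoff f g v0 ≤ 1 := by
  rw [payoff]
  apply Filter.liminf_le_of_frequently_le
  · refine Filter.Eventually.frequently (Filter.Eventually.of_forall (fun m => ?_))
    rcases Nat.eq_zero_or_pos m with rfl | hm
    · simp
    · rw [div_le_one (by exact_mod_cast hm : (0:ℝ) < (m:ℝ))]
      calc (∑ i ∈ Finset.range m, wt (vtx f g v0 i)) ≤ ∑ i ∈ Finset.range m, 1 := by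
            refine Finset.sum_le_sum (fun i _ => ?_)
            rw [wt]; split <;> norm_num
        _ = m := by simp
  · exact Filter.isBoundedUnder_of ⟨0, fun m => bg_avg_nonneg _ m⟩

lemma bgZero_spent (f : Strat) (v0 : Bool) (k : ℕ) :
    fpMinSpent (hist f bgZero v0 k).1 = 0 := by
  induction k with
  | zero => simp [hist, fpMinSpent]
  | succ k ih =>
      have : hist f bgZero v0 (k+1) = step f bgZero (hist f bgZero v0 k) := rfl
      rw [this, step]
      simp [fpMinSpent, bgZero] at ih ⊢
      exact ih

lemma bgZero_legal (hC : 0 ≤ C) : fpMinLegal bgZero C := by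
  intro f v0 k
  constructor
  · exact le_refl 0
  · rw [bgZero_spent]
    simpa [bgZero] using hC

end BG5

end BG

/-- upper bound for the fully-informed player, first-price
poorman bidding, bowtie game.  For every `ε > 0` Min has a collection of
legal strategies `(g_j ∈ S_Min(C_j))_j` such that against every legal Max
strategy `f ∈ S_Max(B)` the expected payoff is smaller than `Pot(B, γ) + ε`. -/
theorem stmt_9 (v0 : Bool) (n : ℕ) (hn : 1 ≤ n) (B : ℝ) (hB : 0 < B)
    (C w : ℕ → ℝ) (hC0 : C 0 = 0)
    (hCinc : ∀ i ∈ Finset.Icc 1 n, C (i - 1) < C i)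
    (hw : ∀ i ∈ Finset.Icc 1 n, 0 < w i)
    (hwsum : ∑ i ∈ Finset.Icc 1 n, w i = 1) :
    ∀ ε > (0 : ℝ), ∃ g : ℕ → Strat,
      (∀ j ∈ Finset.Icc 1 n, fpMinLegal (g j) (C j)) ∧
      ∀ f : Strat, fpMaxLegal f B →
        ∑ j ∈ Finset.Icc 1 n, w j * payoff f (g j) v0 < Pot B n w C + ε := by
  intro ε hε
  have hCpos : ∀ j, 1 ≤ j → j ≤ n → 0 < C j := by
    intro j
    induction j with
    | zero => omega
    | succ k ih =>
        intro _ hkn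
        have h1 : C ((k+1) - 1) < C (k+1) :=
          hCinc (k+1) (Finset.mem_Icc.2 ⟨by omega, hkn⟩)
        simp only [Nat.add_sub_cancel] at h1
        rcases Nat.eq_zero_or_pos k with rfl | hk
        · rw [hC0] at h1; exact h1
        · exact lt_trans (ih hk (by omega)) h1
  have hθl : ∀ j, B / (B + C j) < B / (B + C j) + ε/2 := fun j => by linarith
  refine ⟨fun j => if B / (B + C j) + ε/2 < 1 then bgStrat B (C j) (B / (B + C j) + ε/2)
    else bgZero, ?_, ?_⟩
  · intro j hj
    rw [Finset.mem_Icc] at hj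
    have hCj := hCpos j hj.1 hj.2
    by_cases h1 : B / (B + C j) + ε/2 < 1
    · simpa only [if_pos h1] using bgStrat_legal (B := B) (θ := B / (B + C j) + ε/2)
        hCj.le (bg_Kpos hB hCj (hθl j)).le
    · simpa only [if_neg h1] using bgZero_legal (C := C j) hCj.le
  · intro f hf
    have hple : ∀ j ∈ Finset.Icc 1 n, payoff f
        (if B / (B + C j) + ε/2 < 1 then bgStrat B (C j) (B / (B + C j) + ε/2) else bgZero) v0
        ≤ B / (B + C j) + ε/2 := by
      intro j hj
      rw [Finset.mem_Icc] at hj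
      have hCj := hCpos j hj.1 hj.2
      by_cases h1 : B / (B + C j) + ε/2 < 1
      · rw [if_pos h1]
        exact bg_payoff_le hB hCj (hθl j) h1 hf
      · rw [if_neg h1]
        exact le_trans (bg_payoff_le_one _) (not_lt.1 h1)
    have hsum : ∑ j ∈ Finset.Icc 1 n, w j * payoff f
        (if B / (B + C j) + ε/2 < 1 then bgStrat B (C j) (B / (B + C j) + ε/2) else bgZero) v0
        ≤ ∑ j ∈ Finset.Icc 1 n, w j * (B / (B + C j) + ε/2) := by
      refine Finset.sum_le_sum (fun j hj => ?_)
      exact mul_le_mul_of_nonneg_left (hple j hj) (hw j hj).le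
    have hsplit : ∑ j ∈ Finset.Icc 1 n, w j * (B / (B + C j) + ε/2)
        = Pot B n w C + ε/2 := by
      have h1 : ∑ j ∈ Finset.Icc 1 n, w j * (B / (B + C j) + ε/2)
          = ∑ j ∈ Finset.Icc 1 n, (w j * (B / (B + C j)) + w j * (ε/2)) :=
        Finset.sum_congr rfl (fun j _ => by ring)
      rw [h1, Finset.sum_add_distrib, ← Finset.sum_mul, hwsum, Pot, one_mul]
    rw [hsplit] at hsum
    linarith


end
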